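/- Let F be a field, a ∈ F an element of multiplicative order ℓ (a^ℓ = 1 and a^j ≠ 1 for all 0 < j < ℓ), s, t natural numbers with t < s, and x : Fin s → F such that the map (i,j) ↦ a^j · (x i) from Fin s × Fin ℓ to F is injective. Then the following two subsets of (Fin s → F) are equal: { v | ∃ f ∈ F[X], natDegree(f) ≤ t·ℓ and f(a^j · x i) = v i for all i ∈ Fin s, j ∈ Fin ℓ } = { v | ∃ g ∈ F[X], natDegree(g) ≤ t and v i = g((x i)^ℓ) for all i ∈ Fin s }. -/
import Mathlib


open Polynomial

private lemma coeff_comp_C_mul_X {F : Type*} [CommRing F] (f : F[X]) (a : F) (k : ℕ) :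
    (f.comp (C a * X)).coeff k = a ^ k * f.coeff k := by
  induction f using Polynomial.induction_on' with
  | add p q hp hq => simp [add_comp, hp, hq, mul_add]
  | monomial n c =>
      rw [monomial_comp, mul_pow, ← C_pow, ← mul_assoc, ← C_mul, coeff_C_mul,
        coeff_X_pow, coeff_monomial]
      split_ifs with h1 h2 h2
      · subst h1; ring
      · exact absurd h1.symm h2
      · exact absurd h2.symm h1
      · ring

/-- The punctured invariant subcode of the quasi-cyclic evaluation code (orbits
under `z ↦ a·z`) is the evaluation code on the support `i ↦ (x i)^ℓ`. -/
theorem invariant_evaluation_code_homothety {F : Type*} [Field F] (a : F)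
    (ℓ : ℕ) (hℓ : 0 < ℓ) (ha1 : a ^ ℓ = 1)
    (ha2 : ∀ j : ℕ, 0 < j → j < ℓ → a ^ j ≠ 1) (s t : ℕ) (hts : t < s)
    (x : Fin s → F)
    (hinj : Function.Injective fun p : Fin s × Fin ℓ => a ^ (p.2 : ℕ) * x p.1) :
    {v : Fin s → F | ∃ f : F[X], f.natDegree ≤ t * ℓ ∧
        ∀ (i : Fin s) (j : Fin ℓ), f.eval (a ^ (j : ℕ) * x i) = v i} =
      {v : Fin s → F | ∃ g : F[X], g.natDegree ≤ t ∧
        ∀ i : Fin s, v i = g.eval (x i ^ ℓ)} := by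
  have ha0 : a ≠ 0 := by
    intro h
    rw [h, zero_pow hℓ.ne'] at ha1
    exact zero_ne_one ha1
  -- a^k = 1 ↔ ℓ ∣ k
  have hmod : ∀ k : ℕ, a ^ k = a ^ (k % ℓ) := by
    intro k
    conv_lhs => rw [← Nat.mod_add_div k ℓ]
    rw [pow_add, pow_mul, ha1, one_pow, mul_one]
  have hord : ∀ k : ℕ, a ^ k = 1 ↔ ℓ ∣ k := by
    intro k
    constructor
    · intro hk
      rw [hmod k] at hk
      rcases Nat.eq_zero_or_pos (k % ℓ) with h0 | h0
      · exact Nat.dvd_of_mod_eq_zero h0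
      · exact absurd hk (ha2 _ h0 (Nat.mod_lt _ hℓ))
    · rintro ⟨m, rfl⟩
      rw [pow_mul, ha1, one_pow]
  ext v
  simp only [Set.mem_setOf_eq]
  constructor
  · rintro ⟨f, hdeg, heval⟩
    -- f(aX) - f vanishes at all s*ℓ support points
    set h : F[X] := f.comp (C a * X) - f with hh
    have hdegh : h.natDegree ≤ t * ℓ := by
      refine (natDegree_sub_le _ _).trans (max_le ?_ hdeg)
      refine (natDegree_comp_le).trans ?_
      have : (C a * X : F[X]).natDegree ≤ 1 := natDegree_mul_le.trans (by simp)
      calc f.natDegree * (C a * X).natDegree ≤ f.natDegree * 1 :=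
            Nat.mul_le_mul_left _ this
        _ ≤ t * ℓ := by simpa using hdeg
    have hzero : h = 0 := by
      apply eq_zero_of_natDegree_lt_card_of_eval_eq_zero h hinj
      · rintro ⟨i, j⟩
        simp only [hh, eval_sub, eval_comp, eval_mul, eval_C, eval_X]
        have h1 : a * (a ^ (j : ℕ) * x i) = a ^ ((j : ℕ) + 1) * x i := by
          rw [pow_succ]; ring
        rcases Nat.lt_or_ge ((j : ℕ) + 1) ℓ with hj | hj
        · rw [h1, heval i ⟨(j : ℕ) + 1, hj⟩, heval i j, sub_self]
        · have hje : (j : ℕ) + 1 = ℓ := by omega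
          rw [h1, hje, ha1, one_mul]
          have := heval i ⟨0, hℓ⟩
          simp only [pow_zero, one_mul] at this
          rw [this, heval i j, sub_self]
      · calc h.natDegree ≤ t * ℓ := hdegh
          _ < s * ℓ := (Nat.mul_lt_mul_right hℓ).mpr hts
          _ = Fintype.card (Fin s × Fin ℓ) := by simp [Fintype.card_prod]
    -- so f(aX) = f, coefficients vanish off multiples of ℓ
    have hfa : f.comp (C a * X) = f := by
      have := sub_eq_zero.mp hzero
      exact this
    have hcoeff : ∀ k : ℕ, ¬ (ℓ ∣ k) → f.coeff k = 0 := by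
      intro k hk
      have : a ^ k * f.coeff k = f.coeff k := by
        conv_rhs => rw [← hfa]
        rw [coeff_comp_C_mul_X]
      have h2 : (a ^ k - 1) * f.coeff k = 0 := by ring_nf; linear_combination this
      rcases mul_eq_zero.mp h2 with h3 | h3
      · exact absurd ((hord k).mp (sub_eq_zero.mp h3)) hk
      · exact h3
    refine ⟨∑ m ∈ Finset.range (t + 1), C (f.coeff (m * ℓ)) * X ^ m, ?_, ?_⟩
    · refine natDegree_sum_le_of_forall_le _ _ fun m hm => ?_
      refine (natDegree_C_mul_le _ _).trans ?_
      simp only [natDegree_X_pow]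
      exact Nat.lt_succ_iff.mp (Finset.mem_range.mp hm)
    · intro i
      have h0 := heval i ⟨0, hℓ⟩
      simp only [pow_zero, one_mul] at h0
      rw [← h0]
      rw [eval_finset_sum]
      simp only [eval_mul, eval_C, eval_pow, eval_X]
      rw [eval_eq_sum_range' (show f.natDegree < t * ℓ + 1 by omega)]
      have hsub : (Finset.range (t + 1)).image (· * ℓ) ⊆ Finset.range (t * ℓ + 1) := by
        intro k hk
        simp only [Finset.mem_image, Finset.mem_range] at hk ⊢
        obtain ⟨m, hm, rfl⟩ := hk
        have : m ≤ t := by omega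
        have := Nat.mul_le_mul_right ℓ this
        omega
      have hv : ∀ k ∈ Finset.range (t * ℓ + 1),
          k ∉ (Finset.range (t + 1)).image (· * ℓ) → f.coeff k * x i ^ k = 0 := by
        intro k hk hk2
        rcases em (ℓ ∣ k) with ⟨m, rfl⟩ | hndvd
        · exfalso
          apply hk2
          simp only [Finset.mem_image, Finset.mem_range]
          refine ⟨m, ?_, mul_comm m ℓ ▸ rfl⟩
          simp only [Finset.mem_range] at hk
          by_contra hmt
          have : t + 1 ≤ m := by omega
          have := Nat.mul_le_mul_left ℓ this
          nlinarith
        · rw [hcoeff k hndvd, zero_mul]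
      rw [← Finset.sum_subset hsub hv, Finset.sum_image (fun p _ q _ hpq =>
        Nat.eq_of_mul_eq_mul_right hℓ hpq)]
      apply Finset.sum_congr rfl
      intro m _
      rw [← pow_mul, mul_comm ℓ m]
  · rintro ⟨g, hdeg, heval⟩
    refine ⟨g.comp (X ^ ℓ), ?_, ?_⟩
    · rw [natDegree_comp, natDegree_X_pow]
      exact Nat.mul_le_mul_right ℓ hdeg
    · intro i j
      rw [eval_comp, eval_pow, eval_X, mul_pow, ← pow_mul, mul_comm (j : ℕ) ℓ, pow_mul,
        ha1, one_pow, one_mul, heval i]
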